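/- Let Θ = (α,β,γ) ∈ Sₙ³ be an autotopism of some non-empty partial Latin square, with cycle structure z = (z₁,z₂,z₃) where z_{ti} counts the i-cycles of the t-th component. Let 𝔩 be the minimum of lcm(i,j) over pairs (i,j) such that z_{1i} > 0, z_{2j} > 0, and there exists k with z_{3k} > 0 and (i,j,k) satisfying lcm(i,j)=lcm(i,k)=lcm(j,k)=lcm(i,j,k). Then the number of partial Latin squares of order n of size 𝔩 admitting Θ as an autotopism equals Σ over such pairs (i,j) with lcm(i,j)=𝔩 of z_{1i}·z_{2j}·gcd(i,j)·(Σ over k with (i,j,k) admissible of k·z_{3k}). -/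

import Mathlib

open scoped Classical

/-- An isotopism of order `n`: a triple of permutations of `Fin n`. -/
abbrev Iso (n : ℕ) := Equiv.Perm (Fin n) × Equiv.Perm (Fin n) × Equiv.Perm (Fin n)

/-- `O` is (the orthogonal representation of) a partial Latin square:
any two triples agreeing in two coordinates are equal. -/
def IsPLS {n : ℕ} (O : Finset (Fin n × Fin n × Fin n)) : Prop :=
  ∀ t₁ ∈ O, ∀ t₂ ∈ O,
    ((t₁.1 = t₂.1 ∧ t₁.2.1 = t₂.2.1) → t₁ = t₂) ∧
    ((t₁.1 = t₂.1 ∧ t₁.2.2 = t₂.2.2) → t₁ = t₂) ∧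
    ((t₁.2.1 = t₂.2.1 ∧ t₁.2.2 = t₂.2.2) → t₁ = t₂)

/-- The action of an isotopism on a set of triples. -/
def applyIso {n : ℕ} (Θ : Iso n) (O : Finset (Fin n × Fin n × Fin n)) :
    Finset (Fin n × Fin n × Fin n) :=
  O.image fun t => (Θ.1 t.1, Θ.2.1 t.2.1, Θ.2.2 t.2.2)

/-- `Θ` is an autotopism of `O`. -/
def IsAutotopism {n : ℕ} (Θ : Iso n) (O : Finset (Fin n × Fin n × Fin n)) : Prop :=
  applyIso Θ O = O

/-- `Θ` is an autotopism of some non-empty partial Latin square of order `n`. -/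
def IsAutPLS {n : ℕ} (Θ : Iso n) : Prop :=
  ∃ O : Finset (Fin n × Fin n × Fin n), O.Nonempty ∧ IsPLS O ∧ IsAutotopism Θ O

/-- `O` is (the orthogonal representation of) a Latin square of order `n`. -/
def IsLS {n : ℕ} (O : Finset (Fin n × Fin n × Fin n)) : Prop :=
  IsPLS O ∧ O.card = n * n

/-- The number of `i`-cycles of a permutation (fixed points count as 1-cycles). -/
def numCycles {n : ℕ} (π : Equiv.Perm (Fin n)) (i : ℕ) : ℕ :=
  if i = 1 then (Finset.univ.filter fun x => π x = x).card
  else Multiset.count i π.cycleType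

/-- `π` has a cycle of length `i` in its disjoint cycle decomposition. -/
def HasCycle {n : ℕ} (π : Equiv.Perm (Fin n)) (i : ℕ) : Prop :=
  0 < numCycles π i

/-- The lcm condition on a triple of cycle lengths. -/
def Admissible (i j k : ℕ) : Prop :=
  Nat.lcm i j = Nat.lcm i k ∧ Nat.lcm i j = Nat.lcm j k ∧
    Nat.lcm i j = Nat.lcm i (Nat.lcm j k)

/-- Componentwise composition of isotopisms. -/
def compIso {n : ℕ} (Θ Θ' : Iso n) : Iso n :=
  (Θ.1 * Θ'.1, Θ.2.1 * Θ'.2.1, Θ.2.2 * Θ'.2.2)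

/-- Componentwise inverse of an isotopism. -/
def invIso {n : ℕ} (Θ : Iso n) : Iso n := (Θ.1⁻¹, Θ.2.1⁻¹, Θ.2.2⁻¹)

/-- The set of elements of the cycle of `π` containing `a` (its orbit). -/
def orbitFinset {n : ℕ} (π : Equiv.Perm (Fin n)) (a : Fin n) : Finset (Fin n) :=
  Finset.univ.filter fun x => π.SameCycle a x

/-- `P` is `Θ`-completable: `Θ` is an autotopism of the partial Latin square `P`
and `P` can be completed to a Latin square admitting `Θ` as an autotopism. -/
def ThetaCompletable {n : ℕ} (Θ : Iso n) (O : Finset (Fin n × Fin n × Fin n)) : Prop :=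
  IsPLS O ∧ IsAutotopism Θ O ∧ ∃ L, IsLS L ∧ IsAutotopism Θ L ∧ O ⊆ L

/-- The set of filled cells (row, column) of a partial Latin square. -/
def filledCells {n : ℕ} (O : Finset (Fin n × Fin n × Fin n)) : Finset (Fin n × Fin n) :=
  O.image fun t => (t.1, t.2.1)

/-- The partition function. -/
def pnat (k : ℕ) : ℕ := Fintype.card (Nat.Partition k)

section AuxCL

open Function Finset Equiv

variable {A : Type*} [Fintype A]

/-- Cycle length of `x` under the permutation `π` (minimal period). -/
noncomputable def clen (π : Equiv.Perm A) (x : A) : ℕ :=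
  Function.minimalPeriod ⇑π x

lemma mem_periodicPts_perm (π : Equiv.Perm A) (x : A) :
    x ∈ Function.periodicPts ⇑π := by
  refine ⟨orderOf π, orderOf_pos π, ?_⟩
  show (⇑π)^[orderOf π] x = x
  rw [← Equiv.Perm.coe_pow, pow_orderOf_eq_one]
  rfl

lemma clen_pos (π : Equiv.Perm A) (x : A) : 0 < clen π x :=
  Function.minimalPeriod_pos_of_mem_periodicPts (mem_periodicPts_perm π x)

lemma pow_apply_eq_iff_clen_dvd {π : Equiv.Perm A} {x : A} {m : ℕ} :
    (π ^ m) x = x ↔ clen π x ∣ m := by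
  simp only [clen]
  rw [← Function.isPeriodicPt_iff_minimalPeriod_dvd]
  rfl

lemma clen_eq_one_iff {π : Equiv.Perm A} {x : A} : clen π x = 1 ↔ π x = x :=
  Function.minimalPeriod_eq_one_iff_isFixedPt

lemma pow_apply_eq_pow_apply_iff {π : Equiv.Perm A} {x : A} {a b : ℕ} (hab : a ≤ b) :
    (π ^ a) x = (π ^ b) x ↔ clen π x ∣ b - a := by
  have h : (π ^ b) x = (π ^ a) ((π ^ (b - a)) x) := by
    rw [← Equiv.Perm.mul_apply, ← pow_add, Nat.add_sub_cancel' hab]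
  rw [h, Equiv.apply_eq_iff_eq, eq_comm, pow_apply_eq_iff_clen_dvd]

/-- The orbit of `t` under a permutation, as a finset. -/
noncomputable def orbE (E : Equiv.Perm A) (t : A) : Finset A :=
  Finset.univ.filter fun y => ∃ m : ℕ, (E ^ m) t = y

lemma mem_orbE {E : Equiv.Perm A} {t y : A} : y ∈ orbE E t ↔ ∃ m : ℕ, (E ^ m) t = y := by
  classical
  simp [orbE]

lemma self_mem_orbE (E : Equiv.Perm A) (t : A) : t ∈ orbE E t :=
  mem_orbE.mpr ⟨0, rfl⟩

lemma orbE_card (E : Equiv.Perm A) (t : A) : (orbE E t).card = clen E t := by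
  classical
  have hpos := clen_pos E t
  have himg : orbE E t = (Finset.range (clen E t)).image (fun m => (E ^ m) t) := by
    ext y
    simp only [mem_orbE, Finset.mem_image, Finset.mem_range]
    constructor
    · rintro ⟨m, rfl⟩
      refine ⟨m % clen E t, Nat.mod_lt _ hpos, ?_⟩
      exact Function.iterate_mod_minimalPeriod_eq
    · rintro ⟨m, _, rfl⟩
      exact ⟨m, rfl⟩
  rw [himg, Finset.card_image_of_injOn, Finset.card_range]
  intro a ha b hb hab
  have ha' : a ∈ Set.Iio (Function.minimalPeriod ⇑E t) := by simpa [clen] using ha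
  have hb' : b ∈ Set.Iio (Function.minimalPeriod ⇑E t) := by simpa [clen] using hb
  exact Function.iterate_injOn_Iio_minimalPeriod ha' hb' hab

end AuxCL

section AuxCount

open Finset

variable {n : ℕ}

lemma numCycles_zero (π : Equiv.Perm (Fin n)) : numCycles π 0 = 0 := by
  rw [numCycles, if_neg (by norm_num), Multiset.count_eq_zero]
  intro h
  exact absurd (Equiv.Perm.two_le_of_mem_cycleType h) (by norm_num)

lemma card_clen_eq (π : Equiv.Perm (Fin n)) (i : ℕ) :
    (Finset.univ.filter fun x => clen π x = i).card = i * numCycles π i := by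
  classical
  rcases eq_or_ne i 1 with rfl | hi1
  · rw [numCycles, if_pos rfl, one_mul]
    congr 1
    ext x
    simp [clen_eq_one_iff]
  rcases eq_or_ne i 0 with rfl | hi0
  · rw [zero_mul, Finset.card_eq_zero, Finset.eq_empty_iff_forall_notMem]
    intro x hx
    rw [Finset.mem_filter] at hx
    exact absurd hx.2 (clen_pos π x).ne'
  have hi2 : 2 ≤ i := by omega
  have key : (Finset.univ.filter fun x => clen π x = i) =
      (π.cycleFactorsFinset.filter fun c => c.support.card = i).biUnion Equiv.Perm.support := by
    ext x
    simp only [Finset.mem_filter, Finset.mem_univ, true_and, Finset.mem_biUnion]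
    constructor
    · intro hx
      have hfix : π x ≠ x := by
        intro h
        rw [clen_eq_one_iff.mpr h] at hx
        omega
      have hcl : clen π x = (π.cycleOf x).support.card := by
        apply Nat.dvd_antisymm
        · apply pow_apply_eq_iff_clen_dvd.mp
          have h0 := Equiv.Perm.pow_mod_card_support_cycleOf_self_apply π
            (π.cycleOf x).support.card x
          rwa [Nat.mod_self, pow_zero, Equiv.Perm.one_apply, eq_comm] at h0
        · have hc : (π.cycleOf x).IsCycle := π.isCycle_cycleOf hfix
          rw [← hc.orderOf]
          apply orderOf_dvd_of_pow_eq_one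
          rw [hc.pow_eq_one_iff' (x := x) (by rwa [Equiv.Perm.cycleOf_apply_self])]
          rw [Equiv.Perm.cycleOf_pow_apply_self]
          exact pow_apply_eq_iff_clen_dvd.mpr dvd_rfl
      refine ⟨π.cycleOf x,
        ⟨Equiv.Perm.cycleOf_mem_cycleFactorsFinset_iff.mpr (Equiv.Perm.mem_support.mpr hfix),
          by rw [← hcl, hx]⟩, ?_⟩
      rw [Equiv.Perm.mem_support_cycleOf_iff]
      exact ⟨Equiv.Perm.SameCycle.refl _ _, Equiv.Perm.mem_support.mpr hfix⟩
    · rintro ⟨c, hc, hxc⟩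
      have hcx : c = π.cycleOf x := Equiv.Perm.cycle_is_cycleOf hxc hc.1
      have hfix : π x ≠ x := by
        have h1 := Equiv.Perm.mem_support.mp hxc
        rwa [(Equiv.Perm.mem_cycleFactorsFinset_iff.mp hc.1).2 x hxc] at h1
      have hcl : clen π x = (π.cycleOf x).support.card := by
        apply Nat.dvd_antisymm
        · apply pow_apply_eq_iff_clen_dvd.mp
          have h0 := Equiv.Perm.pow_mod_card_support_cycleOf_self_apply π
            (π.cycleOf x).support.card x
          rwa [Nat.mod_self, pow_zero, Equiv.Perm.one_apply, eq_comm] at h0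
        · have hcy : (π.cycleOf x).IsCycle := π.isCycle_cycleOf hfix
          rw [← hcy.orderOf]
          apply orderOf_dvd_of_pow_eq_one
          rw [hcy.pow_eq_one_iff' (x := x) (by rwa [Equiv.Perm.cycleOf_apply_self])]
          rw [Equiv.Perm.cycleOf_pow_apply_self]
          exact pow_apply_eq_iff_clen_dvd.mpr dvd_rfl
      rw [hcl, ← hcx, hc.2]
  rw [key, Finset.card_biUnion]
  · have hsum : ∑ c ∈ (π.cycleFactorsFinset.filter fun c => c.support.card = i),
        c.support.card = (π.cycleFactorsFinset.filter fun c => c.support.card = i).card * i := by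
      rw [Finset.sum_congr rfl (fun c hc => (Finset.mem_filter.mp hc).2), Finset.sum_const,
        smul_eq_mul]
    rw [hsum, numCycles, if_neg hi1]
    have hcount : Multiset.count i π.cycleType =
        (π.cycleFactorsFinset.filter fun c => c.support.card = i).card := by
      rw [Equiv.Perm.cycleType_def, Multiset.count_map]
      rw [Finset.card_def, Finset.filter_val]
      congr 1
      apply Multiset.filter_congr
      intro c _
      constructor
      · intro h; exact h.symm
      · intro h; exact h.symm
    rw [hcount, Nat.mul_comm]
  · intro c hc d hd hcd
    exact (Equiv.Perm.cycleFactorsFinset_pairwise_disjoint π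
      (Finset.mem_filter.mp hc).1 (Finset.mem_filter.mp hd).1 hcd).disjoint_support

lemma clen_facts (π : Equiv.Perm (Fin n)) (x : Fin n) :
    0 < numCycles π (clen π x) ∧ clen π x ∈ Finset.Icc 1 n := by
  set i := clen π x with hi
  have hx : x ∈ Finset.univ.filter fun y => clen π y = i := by simp [hi]
  have hpos : 0 < (Finset.univ.filter fun y => clen π y = i).card :=
    Finset.card_pos.mpr ⟨x, hx⟩
  have hle : (Finset.univ.filter fun y => clen π y = i).card ≤ n := by
    refine le_trans (Finset.card_filter_le _ _) ?_
    simp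
  rw [card_clen_eq] at hpos hle
  have hz : 0 < numCycles π i := by
    rcases Nat.eq_zero_or_pos (numCycles π i) with h | h
    · rw [h, Nat.mul_zero] at hpos; omega
    · exact h
  refine ⟨hz, Finset.mem_Icc.mpr ⟨clen_pos π x, ?_⟩⟩
  calc i ≤ i * numCycles π i := Nat.le_mul_of_pos_right i hz
  _ ≤ n := hle

end AuxCount

section AuxPerm

open Finset

variable {n : ℕ} (α β γ : Equiv.Perm (Fin n))

/-- The permutation of triples induced by an isotopism. -/
def permE : Equiv.Perm (Fin n × Fin n × Fin n) :=
  Equiv.prodCongr α (Equiv.prodCongr β γ)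

lemma permE_apply (t : Fin n × Fin n × Fin n) :
    permE α β γ t = (α t.1, β t.2.1, γ t.2.2) := rfl

lemma permE_pow_apply (m : ℕ) (t : Fin n × Fin n × Fin n) :
    ((permE α β γ) ^ m) t = ((α ^ m) t.1, (β ^ m) t.2.1, (γ ^ m) t.2.2) := by
  induction m with
  | zero => simp
  | succ m ih =>
    rw [pow_succ', Equiv.Perm.mul_apply, ih, permE_apply, pow_succ', pow_succ', pow_succ',
      Equiv.Perm.mul_apply, Equiv.Perm.mul_apply, Equiv.Perm.mul_apply]

lemma applyIso_eq_image (O : Finset (Fin n × Fin n × Fin n)) :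
    applyIso (α, β, γ) O = O.image ⇑(permE α β γ) := by
  apply Finset.image_congr
  intro t _
  rfl

variable {α β γ}

lemma pow_mem_of_autotopism {O : Finset (Fin n × Fin n × Fin n)}
    (hO : IsAutotopism (α, β, γ) O) {t : Fin n × Fin n × Fin n} (ht : t ∈ O) (m : ℕ) :
    ((permE α β γ) ^ m) t ∈ O := by
  induction m with
  | zero => simpa using ht
  | succ m ih =>
    rw [pow_succ', Equiv.Perm.mul_apply]
    have h : applyIso (α, β, γ) O = O := hO
    rw [applyIso_eq_image] at h
    rw [← h]
    exact Finset.mem_image_of_mem _ ih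

lemma orbE_subset {O : Finset (Fin n × Fin n × Fin n)}
    (hO : IsAutotopism (α, β, γ) O) {t : Fin n × Fin n × Fin n} (ht : t ∈ O) :
    orbE (permE α β γ) t ⊆ O := by
  intro y hy
  obtain ⟨m, rfl⟩ := mem_orbE.mp hy
  exact pow_mem_of_autotopism hO ht m

lemma autotopism_orbE (t : Fin n × Fin n × Fin n) :
    IsAutotopism (α, β, γ) (orbE (permE α β γ) t) := by
  show applyIso _ _ = _
  rw [applyIso_eq_image]
  ext y
  simp only [Finset.mem_image, mem_orbE]
  constructor
  · rintro ⟨z, ⟨m, rfl⟩, rfl⟩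
    refine ⟨m + 1, ?_⟩
    rw [pow_succ', Equiv.Perm.mul_apply]
  · rintro ⟨m, rfl⟩
    set E := permE α β γ
    have hpos := clen_pos E t
    refine ⟨(E ^ (m + (clen E t - 1))) t, ⟨_, rfl⟩, ?_⟩
    have h2 : (E ^ clen E t) t = t := pow_apply_eq_iff_clen_dvd.mpr dvd_rfl
    have h1 : m + (clen E t - 1) + 1 = m + clen E t := by omega
    rw [← Equiv.Perm.mul_apply, ← pow_succ', h1, pow_add, Equiv.Perm.mul_apply, h2]

lemma clen_permE (t : Fin n × Fin n × Fin n) :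
    clen (permE α β γ) t =
      Nat.lcm (clen α t.1) (Nat.lcm (clen β t.2.1) (clen γ t.2.2)) := by
  have hfix : ∀ m : ℕ, ((permE α β γ) ^ m) t = t ↔
      (clen α t.1 ∣ m ∧ clen β t.2.1 ∣ m ∧ clen γ t.2.2 ∣ m) := by
    intro m
    rw [permE_pow_apply]
    simp only [Prod.ext_iff]
    rw [pow_apply_eq_iff_clen_dvd, pow_apply_eq_iff_clen_dvd, pow_apply_eq_iff_clen_dvd]
  apply Nat.dvd_antisymm
  · apply pow_apply_eq_iff_clen_dvd.mp
    rw [hfix]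
    refine ⟨Nat.dvd_lcm_left _ _, ?_, ?_⟩
    · exact dvd_trans (Nat.dvd_lcm_left _ _) (Nat.dvd_lcm_right _ _)
    · exact dvd_trans (Nat.dvd_lcm_right _ _) (Nat.dvd_lcm_right _ _)
  · have h := (hfix (clen (permE α β γ) t)).mp (pow_apply_eq_iff_clen_dvd.mpr dvd_rfl)
    exact Nat.lcm_dvd h.1 (Nat.lcm_dvd h.2.1 h.2.2)

end AuxPerm

section AuxClaims

open Finset

variable {n : ℕ} {α β γ : Equiv.Perm (Fin n)}

lemma claim1 {O : Finset (Fin n × Fin n × Fin n)} (hPLS : IsPLS O)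
    (hAut : IsAutotopism (α, β, γ) O) {t : Fin n × Fin n × Fin n} (ht : t ∈ O) :
    Admissible (clen α t.1) (clen β t.2.1) (clen γ t.2.2) ∧
      orbE (permE α β γ) t ⊆ O ∧
      (orbE (permE α β γ) t).card = Nat.lcm (clen α t.1) (clen β t.2.1) := by
  set i := clen α t.1 with hi
  set j := clen β t.2.1 with hj
  set k := clen γ t.2.2 with hk
  have e1 : ∀ m : ℕ, i ∣ m → (((permE α β γ) ^ m) t).1 = t.1 := by
    intro m hm
    rw [permE_pow_apply]
    exact pow_apply_eq_iff_clen_dvd.mpr hm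
  have e2 : ∀ m : ℕ, j ∣ m → (((permE α β γ) ^ m) t).2.1 = t.2.1 := by
    intro m hm
    rw [permE_pow_apply]
    exact pow_apply_eq_iff_clen_dvd.mpr hm
  have e3 : ∀ m : ℕ, k ∣ m → (((permE α β γ) ^ m) t).2.2 = t.2.2 := by
    intro m hm
    rw [permE_pow_apply]
    exact pow_apply_eq_iff_clen_dvd.mpr hm
  have d1 : ∀ m : ℕ, t = ((permE α β γ) ^ m) t → i ∣ m := by
    intro m hm
    apply pow_apply_eq_iff_clen_dvd.mp
    have := congrArg (fun p : Fin n × Fin n × Fin n => p.1) hm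
    rw [permE_pow_apply] at this
    exact this.symm
  have d2 : ∀ m : ℕ, t = ((permE α β γ) ^ m) t → j ∣ m := by
    intro m hm
    apply pow_apply_eq_iff_clen_dvd.mp
    have := congrArg (fun p : Fin n × Fin n × Fin n => p.2.1) hm
    rw [permE_pow_apply] at this
    exact this.symm
  have d3 : ∀ m : ℕ, t = ((permE α β γ) ^ m) t → k ∣ m := by
    intro m hm
    apply pow_apply_eq_iff_clen_dvd.mp
    have := congrArg (fun p : Fin n × Fin n × Fin n => p.2.2) hm
    rw [permE_pow_apply] at this
    exact this.symm
  have hk' : k ∣ Nat.lcm i j := by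
    set m := Nat.lcm i j
    have hm : ((permE α β γ) ^ m) t ∈ O := pow_mem_of_autotopism hAut ht m
    have heq : t = ((permE α β γ) ^ m) t :=
      (hPLS t ht _ hm).1 ⟨(e1 m (Nat.dvd_lcm_left i j)).symm, (e2 m (Nat.dvd_lcm_right i j)).symm⟩
    exact d3 m heq
  have hj' : j ∣ Nat.lcm i k := by
    set m := Nat.lcm i k
    have hm : ((permE α β γ) ^ m) t ∈ O := pow_mem_of_autotopism hAut ht m
    have heq : t = ((permE α β γ) ^ m) t :=
      (hPLS t ht _ hm).2.1
        ⟨(e1 m (Nat.dvd_lcm_left i k)).symm, (e3 m (Nat.dvd_lcm_right i k)).symm⟩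
    exact d2 m heq
  have hi' : i ∣ Nat.lcm j k := by
    set m := Nat.lcm j k
    have hm : ((permE α β γ) ^ m) t ∈ O := pow_mem_of_autotopism hAut ht m
    have heq : t = ((permE α β γ) ^ m) t :=
      (hPLS t ht _ hm).2.2
        ⟨(e2 m (Nat.dvd_lcm_left j k)).symm, (e3 m (Nat.dvd_lcm_right j k)).symm⟩
    exact d1 m heq
  have hadm : Admissible i j k := by
    refine ⟨Nat.dvd_antisymm (Nat.lcm_dvd (Nat.dvd_lcm_left i k) hj')
        (Nat.lcm_dvd (Nat.dvd_lcm_left i j) hk'),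
      Nat.dvd_antisymm (Nat.lcm_dvd hi' (Nat.dvd_lcm_left j k))
        (Nat.lcm_dvd (Nat.dvd_lcm_right i j) hk'), ?_⟩
    refine Nat.dvd_antisymm
      (Nat.lcm_dvd (Nat.dvd_lcm_left i (Nat.lcm j k))
        (dvd_trans (Nat.dvd_lcm_left j k) (Nat.dvd_lcm_right i (Nat.lcm j k))))
      (Nat.lcm_dvd (Nat.dvd_lcm_left i j) (Nat.lcm_dvd (Nat.dvd_lcm_right i j) hk'))
  exact ⟨hadm, orbE_subset hAut ht, by rw [orbE_card, clen_permE, ← hadm.2.2]⟩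

lemma claim2 {t : Fin n × Fin n × Fin n}
    (hadm : Admissible (clen α t.1) (clen β t.2.1) (clen γ t.2.2)) :
    IsPLS (orbE (permE α β γ) t) := by
  set i := clen α t.1 with hi
  set j := clen β t.2.1 with hj
  set k := clen γ t.2.2 with hk
  set E := permE α β γ with hE
  have c1 : ∀ a b : ℕ, a ≤ b → (((E ^ a) t).1 = ((E ^ b) t).1 ↔ i ∣ b - a) := by
    intro a b hab
    rw [hE, permE_pow_apply, permE_pow_apply]
    exact pow_apply_eq_pow_apply_iff hab
  have c2 : ∀ a b : ℕ, a ≤ b → (((E ^ a) t).2.1 = ((E ^ b) t).2.1 ↔ j ∣ b - a) := by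
    intro a b hab
    rw [hE, permE_pow_apply, permE_pow_apply]
    exact pow_apply_eq_pow_apply_iff hab
  have c3 : ∀ a b : ℕ, a ≤ b → (((E ^ a) t).2.2 = ((E ^ b) t).2.2 ↔ k ∣ b - a) := by
    intro a b hab
    rw [hE, permE_pow_apply, permE_pow_apply]
    exact pow_apply_eq_pow_apply_iff hab
  have key : ∀ a b : ℕ, a ≤ b →
      ((i ∣ b - a ∧ j ∣ b - a) ∨ (i ∣ b - a ∧ k ∣ b - a) ∨ (j ∣ b - a ∧ k ∣ b - a)) →
      (E ^ a) t = (E ^ b) t := by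
    intro a b hab hd
    have hall : i ∣ b - a ∧ j ∣ b - a ∧ k ∣ b - a := by
      obtain ⟨h1, h2⟩ | ⟨h1, h2⟩ | ⟨h1, h2⟩ := hd
      · refine ⟨h1, h2, dvd_trans ?_ (Nat.lcm_dvd h1 h2)⟩
        rw [hadm.1]
        exact Nat.dvd_lcm_right i k
      · refine ⟨h1, dvd_trans ?_ (Nat.lcm_dvd h1 h2), h2⟩
        rw [← hadm.1]
        exact Nat.dvd_lcm_right i j
      · refine ⟨dvd_trans ?_ (Nat.lcm_dvd h1 h2), h1, h2⟩
        rw [← hadm.2.1]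
        exact Nat.dvd_lcm_left i j
    rw [hE, permE_pow_apply, permE_pow_apply]
    exact Prod.ext_iff.mpr ⟨(pow_apply_eq_pow_apply_iff hab).mpr hall.1,
      Prod.ext_iff.mpr ⟨(pow_apply_eq_pow_apply_iff hab).mpr hall.2.1,
        (pow_apply_eq_pow_apply_iff hab).mpr hall.2.2⟩⟩
  intro t₁ h₁ t₂ h₂
  obtain ⟨a, rfl⟩ := mem_orbE.mp h₁
  obtain ⟨b, rfl⟩ := mem_orbE.mp h₂
  refine ⟨?_, ?_, ?_⟩
  · rintro ⟨ha, hb⟩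
    rcases le_total a b with h | h
    · exact key a b h (Or.inl ⟨(c1 a b h).mp ha, (c2 a b h).mp hb⟩)
    · exact (key b a h (Or.inl ⟨(c1 b a h).mp ha.symm, (c2 b a h).mp hb.symm⟩)).symm
  · rintro ⟨ha, hb⟩
    rcases le_total a b with h | h
    · exact key a b h (Or.inr (Or.inl ⟨(c1 a b h).mp ha, (c3 a b h).mp hb⟩))
    · exact (key b a h (Or.inr (Or.inl ⟨(c1 b a h).mp ha.symm, (c3 b a h).mp hb.symm⟩))).symm
  · rintro ⟨ha, hb⟩
    rcases le_total a b with h | h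
    · exact key a b h (Or.inr (Or.inr ⟨(c2 a b h).mp ha, (c3 a b h).mp hb⟩))
    · exact (key b a h (Or.inr (Or.inr ⟨(c2 b a h).mp ha.symm, (c3 b a h).mp hb.symm⟩))).symm

end AuxClaims

/-- the number of partial Latin squares of minimal size `l` admitting
`Θ = (α,β,γ)` as autotopism, in terms of the cycle structure of `Θ`. -/
theorem stmt14 (n : ℕ) (α β γ : Equiv.Perm (Fin n)) (hA : IsAutPLS (α, β, γ)) (l : ℕ)
    (hmem : ∃ i j k : ℕ, 0 < numCycles α i ∧ 0 < numCycles β j ∧ 0 < numCycles γ k ∧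
      Admissible i j k ∧ Nat.lcm i j = l)
    (hmin : ∀ i j k : ℕ, 0 < numCycles α i → 0 < numCycles β j → 0 < numCycles γ k →
      Admissible i j k → l ≤ Nat.lcm i j) :
    Set.ncard {O : Finset (Fin n × Fin n × Fin n) | IsPLS O ∧ O.card = l ∧
        IsAutotopism (α, β, γ) O} =
      ∑ i ∈ Finset.Icc 1 n, ∑ j ∈ Finset.Icc 1 n,
        (if 0 < numCycles α i ∧ 0 < numCycles β j ∧ Nat.lcm i j = l ∧
            (∃ k : ℕ, 0 < numCycles γ k ∧ Admissible i j k) then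
          numCycles α i * numCycles β j * Nat.gcd i j *
            ∑ k ∈ Finset.Icc 1 n, (if Admissible i j k then k * numCycles γ k else 0)
        else 0) := by
  classical
  obtain ⟨i₀, j₀, k₀, hz1₀, hz2₀, hz3₀, hadm₀, hl₀⟩ := hmem
  have hi₀ : i₀ ≠ 0 := by rintro rfl; rw [numCycles_zero] at hz1₀; omega
  have hj₀ : j₀ ≠ 0 := by rintro rfl; rw [numCycles_zero] at hz2₀; omega
  have hl : 0 < l := by
    rw [← hl₀]
    exact Nat.pos_of_ne_zero (Nat.lcm_ne_zero hi₀ hj₀)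
  set E := permE α β γ with hE
  set Sf : Finset (Finset (Fin n × Fin n × Fin n)) :=
    Finset.univ.filter (fun O => IsPLS O ∧ O.card = l ∧ IsAutotopism (α, β, γ) O) with hSf
  have hset : {O : Finset (Fin n × Fin n × Fin n) | IsPLS O ∧ O.card = l ∧
      IsAutotopism (α, β, γ) O} = ↑Sf := by
    ext O
    simp [hSf]
  rw [hset, Set.ncard_coe_finset]
  set T : Finset (Fin n × Fin n × Fin n) :=
    Finset.univ.filter (fun t => Admissible (clen α t.1) (clen β t.2.1) (clen γ t.2.2) ∧
      Nat.lcm (clen α t.1) (clen β t.2.1) = l) with hT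
  have claimA : ∀ O ∈ Sf, ∀ t ∈ O, orbE E t = O ∧ t ∈ T := by
    intro O hO t ht
    rw [hSf, Finset.mem_filter] at hO
    obtain ⟨-, hPLS, hcard, hAut⟩ := hO
    obtain ⟨hadm, hsub, hcardorb⟩ := claim1 hPLS hAut ht
    have h1 := (clen_facts α t.1).1
    have h2 := (clen_facts β t.2.1).1
    have h3 := (clen_facts γ t.2.2).1
    have hge : l ≤ Nat.lcm (clen α t.1) (clen β t.2.1) := hmin _ _ _ h1 h2 h3 hadm
    have hle : (orbE E t).card ≤ O.card := Finset.card_le_card hsub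
    have hll : Nat.lcm (clen α t.1) (clen β t.2.1) = l := by
      rw [hcardorb, hcard] at hle
      omega
    refine ⟨Finset.eq_of_subset_of_card_le hsub ?_, ?_⟩
    · rw [hcard, hcardorb, hll]
    · rw [hT, Finset.mem_filter]
      exact ⟨Finset.mem_univ _, hadm, hll⟩
  have claimB : ∀ t ∈ T, orbE E t ∈ Sf := by
    intro t ht
    rw [hT, Finset.mem_filter] at ht
    obtain ⟨-, hadm, hll⟩ := ht
    rw [hSf, Finset.mem_filter]
    exact ⟨Finset.mem_univ _, claim2 hadm,
      by rw [hE, orbE_card, clen_permE, ← hadm.2.2, hll], autotopism_orbE t⟩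
  have count1 : T.card = Sf.card * l := by
    rw [Finset.card_eq_sum_card_fiberwise claimB]
    have hfib : ∀ O ∈ Sf, (T.filter fun t => orbE E t = O).card = l := by
      intro O hO
      have hfe : T.filter (fun t => orbE E t = O) = O := by
        ext u
        constructor
        · intro hu
          rw [Finset.mem_filter] at hu
          rw [← hu.2]
          exact self_mem_orbE E u
        · intro hu
          obtain ⟨horb, hT'⟩ := claimA O hO u hu
          exact Finset.mem_filter.mpr ⟨hT', horb⟩
      rw [hfe]
      rw [hSf, Finset.mem_filter] at hO
      exact hO.2.2.1
    rw [Finset.sum_congr rfl hfib, Finset.sum_const, smul_eq_mul]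
  have hmaps : ∀ t ∈ T, (clen α t.1, clen β t.2.1, clen γ t.2.2) ∈
      (Finset.Icc 1 n ×ˢ Finset.Icc 1 n ×ˢ Finset.Icc 1 n) := by
    intro t _
    rw [Finset.mem_product, Finset.mem_product]
    exact ⟨(clen_facts α t.1).2, (clen_facts β t.2.1).2, (clen_facts γ t.2.2).2⟩
  have count2 : T.card = ∑ i ∈ Finset.Icc 1 n, ∑ j ∈ Finset.Icc 1 n, ∑ k ∈ Finset.Icc 1 n,
      (if Admissible i j k ∧ Nat.lcm i j = l then
        (i * numCycles α i) * ((j * numCycles β j) * (k * numCycles γ k)) else 0) := by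
    rw [Finset.card_eq_sum_card_fiberwise hmaps]
    rw [Finset.sum_product]
    refine Finset.sum_congr rfl fun i _ => ?_
    rw [Finset.sum_product]
    refine Finset.sum_congr rfl fun j _ => Finset.sum_congr rfl fun k _ => ?_
    by_cases hc : Admissible i j k ∧ Nat.lcm i j = l
    · rw [if_pos hc]
      have hfe : T.filter (fun t => (clen α t.1, clen β t.2.1, clen γ t.2.2) = (i, j, k)) =
          (Finset.univ.filter fun x => clen α x = i) ×ˢ
            ((Finset.univ.filter fun x => clen β x = j) ×ˢ
              (Finset.univ.filter fun x => clen γ x = k)) := by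
        ext u
        simp only [hT, Finset.mem_filter, Finset.mem_univ, true_and, Finset.mem_product,
          Prod.mk.injEq]
        constructor
        · rintro ⟨-, h1, h2, h3⟩
          exact ⟨h1, h2, h3⟩
        · rintro ⟨h1, h2, h3⟩
          rw [h1, h2, h3]
          exact ⟨hc, rfl, rfl, rfl⟩
      rw [hfe, Finset.card_product, Finset.card_product, card_clen_eq, card_clen_eq,
        card_clen_eq]
    · rw [if_neg hc, Finset.card_eq_zero, Finset.eq_empty_iff_forall_notMem]
      intro u hu
      simp only [hT, Finset.mem_filter, Finset.mem_univ, true_and, Prod.mk.injEq] at hu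
      obtain ⟨⟨hadm, hll⟩, h1, h2, h3⟩ := hu
      rw [← h1, ← h2, ← h3] at hc
      exact hc ⟨hadm, hll⟩
  have count3 : (∑ i ∈ Finset.Icc 1 n, ∑ j ∈ Finset.Icc 1 n,
      (if 0 < numCycles α i ∧ 0 < numCycles β j ∧ Nat.lcm i j = l ∧
          (∃ k : ℕ, 0 < numCycles γ k ∧ Admissible i j k) then
        numCycles α i * numCycles β j * Nat.gcd i j *
          ∑ k ∈ Finset.Icc 1 n, (if Admissible i j k then k * numCycles γ k else 0)
      else 0)) * l
      = ∑ i ∈ Finset.Icc 1 n, ∑ j ∈ Finset.Icc 1 n, ∑ k ∈ Finset.Icc 1 n,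
        (if Admissible i j k ∧ Nat.lcm i j = l then
          (i * numCycles α i) * ((j * numCycles β j) * (k * numCycles γ k)) else 0) := by
    rw [Finset.sum_mul]
    refine Finset.sum_congr rfl fun i _ => ?_
    rw [Finset.sum_mul]
    refine Finset.sum_congr rfl fun j _ => ?_
    by_cases hll : Nat.lcm i j = l
    · by_cases hz1 : 0 < numCycles α i
      · by_cases hz2 : 0 < numCycles β j
        · by_cases hex : ∃ k : ℕ, 0 < numCycles γ k ∧ Admissible i j k
          · rw [if_pos ⟨hz1, hz2, hll, hex⟩]
            have hgl : Nat.gcd i j * l = i * j := by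
              rw [← hll]
              exact Nat.gcd_mul_lcm i j
            rw [Finset.mul_sum, Finset.sum_mul]
            refine Finset.sum_congr rfl fun k _ => ?_
            by_cases hadm : Admissible i j k
            · rw [if_pos hadm, if_pos ⟨hadm, hll⟩]
              calc numCycles α i * numCycles β j * Nat.gcd i j * (k * numCycles γ k) * l
                  = Nat.gcd i j * l *
                      (numCycles α i * (numCycles β j * (k * numCycles γ k))) := by ring
                _ = i * j * (numCycles α i * (numCycles β j * (k * numCycles γ k))) := by
                    rw [hgl]
                _ = i * numCycles α i * (j * numCycles β j * (k * numCycles γ k)) := by ring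
            · rw [if_neg hadm, if_neg (fun h => hadm h.1)]
              ring
          · rw [if_neg (by rintro ⟨-, -, -, h⟩; exact hex h), zero_mul]
            symm
            refine Finset.sum_eq_zero fun k _ => ?_
            by_cases hadm : Admissible i j k
            · rw [if_pos ⟨hadm, hll⟩]
              have h3 : numCycles γ k = 0 := by
                by_contra h
                exact hex ⟨k, Nat.pos_of_ne_zero h, hadm⟩
              rw [h3]
              ring
            · rw [if_neg (fun h => hadm h.1)]
        · rw [if_neg (by rintro ⟨-, h, -⟩; exact hz2 h), zero_mul]
          symm
          refine Finset.sum_eq_zero fun k _ => ?_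
          have h2 : numCycles β j = 0 := by omega
          by_cases h : Admissible i j k ∧ Nat.lcm i j = l
          · rw [if_pos h, h2]
            ring
          · rw [if_neg h]
      · rw [if_neg (by rintro ⟨h, -⟩; exact hz1 h), zero_mul]
        symm
        refine Finset.sum_eq_zero fun k _ => ?_
        have h1 : numCycles α i = 0 := by omega
        by_cases h : Admissible i j k ∧ Nat.lcm i j = l
        · rw [if_pos h, h1]
          ring
        · rw [if_neg h]
    · rw [if_neg (by rintro ⟨-, -, h, -⟩; exact hll h), zero_mul]
      symm
      refine Finset.sum_eq_zero fun k _ => ?_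
      rw [if_neg (fun h => hll h.2)]
  refine Nat.eq_of_mul_eq_mul_right hl ?_
  rw [← count1, count2, ← count3]
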